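/- Let a and b be n×n positive definite complex matrices with Tr a = Tr b, let t = ‖b − a‖₁/2, and suppose a ≥ γ·I for a scalar γ ≥ 0. Then ∫₀^∞ (b + s·I)⁻¹ (b − a) (b + s·I)⁻¹ ds ≤ (t/(γ + t))·I in the positive semidefinite (Loewner) order. -/

import Mathlib

open Matrix MeasureTheory
open scoped ComplexOrder

/-- Matrix logarithm on the support: apply `Real.log` (which is `0` at `0`) to the
eigenvalues of a Hermitian matrix via functional calculus; junk value `0` otherwise. -/
noncomputable def mlog {n : Type*} [Fintype n] [DecidableEq n] (A : Matrix n n ℂ) :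
    Matrix n n ℂ :=
  if hA : A.IsHermitian then hA.cfc Real.log else 0

/-- Quantum relative entropy `S(A‖B) = Tr A (log A - log B)`. -/
noncomputable def qRelEnt {n : Type*} [Fintype n] [DecidableEq n] (A B : Matrix n n ℂ) : ℝ :=
  ((A * (mlog A - mlog B)).trace).re

namespace Matrix.PosSemidef

/-- Square root of a positive semidefinite matrix (as in the older Mathlib). -/
noncomputable def sqrt {n : Type*} [Fintype n] [DecidableEq n] {𝕜 : Type*} [RCLike 𝕜]
    {A : Matrix n n 𝕜} (hA : A.PosSemidef) : Matrix n n 𝕜 :=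
  hA.1.eigenvectorUnitary.1 * diagonal ((↑) ∘ (√·) ∘ hA.1.eigenvalues) *
    (star hA.1.eigenvectorUnitary : Matrix n n 𝕜)

lemma posSemidef_sqrt {n : Type*} [Fintype n] [DecidableEq n] {𝕜 : Type*} [RCLike 𝕜]
    {A : Matrix n n 𝕜} (hA : A.PosSemidef) : PosSemidef hA.sqrt := by
  apply PosSemidef.mul_mul_conjTranspose_same
  refine posSemidef_diagonal_iff.mpr fun i ↦ ?_
  rw [Function.comp_apply, RCLike.nonneg_iff]
  constructor
  · simp only [Function.comp_apply, RCLike.ofReal_re]; exact Real.sqrt_nonneg _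
  · simp only [Function.comp_apply, RCLike.ofReal_im]

end Matrix.PosSemidef

/-- Trace norm `‖X‖₁ = Tr √(Xᴴ X)`. -/
noncomputable def traceNorm {n : Type*} [Fintype n] [DecidableEq n] (X : Matrix n n ℂ) : ℝ :=
  ((Matrix.posSemidef_conjTranspose_mul_self X).sqrt.trace).re

/-- Smallest eigenvalue of a Hermitian matrix (junk value `0` otherwise). -/
noncomputable def lamMin {n : Type*} [Fintype n] [DecidableEq n] (A : Matrix n n ℂ) : ℝ :=
  if hA : A.IsHermitian then ⨅ i, hA.eigenvalues i else 0

/-- Largest eigenvalue of a Hermitian matrix (junk value `0` otherwise). -/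
noncomputable def lamMax {n : Type*} [Fintype n] [DecidableEq n] (A : Matrix n n ℂ) : ℝ :=
  if hA : A.IsHermitian then ⨆ i, hA.eigenvalues i else 0

/-- Operator norm: largest eigenvalue of `√(Xᴴ X)` (largest singular value). -/
noncomputable def opNorm {n : Type*} [Fintype n] [DecidableEq n] (X : Matrix n n ℂ) : ℝ :=
  ⨆ i, (Matrix.posSemidef_conjTranspose_mul_self X).posSemidef_sqrt.1.eigenvalues i

set_option linter.unusedSectionVars false
set_option maxHeartbeats 1600000

section sqrt_helper
open scoped MatrixOrder
lemma Matrix.PosSemidef.eq_sqrt_of_sq_eq {n : Type*} [Fintype n] [DecidableEq n]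
    {A : Matrix n n ℂ} (hA : A.PosSemidef) {B : Matrix n n ℂ} (hB : B.PosSemidef)
    (hAB : A ^ 2 = B) : A = hB.sqrt := by
  have h1 : CFC.sqrt B = A := CFC.sqrt_unique (by rw [← hAB, sq]) hA.nonneg
  have h2 : CFC.sqrt B = hB.sqrt := by
    rw [CFC.sqrt_eq_real_sqrt B hB.nonneg, cfcₙ_eq_cfc, hB.1.cfc_eq, IsHermitian.cfc,
      Unitary.conjStarAlgAut_apply, Matrix.PosSemidef.sqrt]
  rw [← h1, h2]
end sqrt_helper

section helpers
open Set

-- scalar integral lemma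
lemma aux_intOn (d : ℝ) (hd : 0 < d) : IntegrableOn (fun s : ℝ => ((d + s)^2)⁻¹) (Ioi 0) := by
  have hderiv : ∀ x ∈ Ioi (0:ℝ), HasDerivAt (fun s => -(d + s)⁻¹) (((d + x)^2)⁻¹) x := by
    intro x hx
    have h0 : d + x ≠ 0 := by have := hx.out; nlinarith
    have : HasDerivAt (fun s : ℝ => d + s) 1 x := by
      simpa using (hasDerivAt_id x).const_add d
    have := (this.inv h0).neg
    exact this.congr_deriv (by rw [neg_div, neg_neg, one_div])
  have hcont : ContinuousWithinAt (fun s : ℝ => -(d + s)⁻¹) (Ici 0) 0 := by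
    have h0 : d + (0:ℝ) ≠ 0 := by positivity
    exact (((continuous_const.add continuous_id).continuousAt).inv₀ h0).neg.continuousWithinAt
  have htend : Filter.Tendsto (fun s : ℝ => -(d + s)⁻¹) Filter.atTop (nhds 0) := by
    rw [show (0:ℝ) = -0 by ring]
    exact (Filter.Tendsto.inv_tendsto_atTop (Filter.tendsto_atTop_add_const_left _ d Filter.tendsto_id)).neg
  exact integrableOn_Ioi_deriv_of_nonneg hcont hderiv (fun x hx => by positivity) htend

lemma aux_int (d : ℝ) (hd : 0 < d) : ∫ s in Ioi (0:ℝ), ((d + s)^2)⁻¹ = d⁻¹ := by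
  have hderiv : ∀ x ∈ Ioi (0:ℝ), HasDerivAt (fun s => -(d + s)⁻¹) (((d + x)^2)⁻¹) x := by
    intro x hx
    have h0 : d + x ≠ 0 := by have := hx.out; nlinarith
    have : HasDerivAt (fun s : ℝ => d + s) 1 x := by
      simpa using (hasDerivAt_id x).const_add d
    have := (this.inv h0).neg
    exact this.congr_deriv (by rw [neg_div, neg_neg, one_div])
  have hcont : ContinuousWithinAt (fun s : ℝ => -(d + s)⁻¹) (Ici 0) 0 := by
    have h0 : d + (0:ℝ) ≠ 0 := by positivity
    exact (((continuous_const.add continuous_id).continuousAt).inv₀ h0).neg.continuousWithinAt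
  have htend : Filter.Tendsto (fun s : ℝ => -(d + s)⁻¹) Filter.atTop (nhds 0) := by
    rw [show (0:ℝ) = -0 by ring]
    exact (Filter.Tendsto.inv_tendsto_atTop (Filter.tendsto_atTop_add_const_left _ d Filter.tendsto_id)).neg
  rw [integral_Ioi_of_hasDerivAt_of_tendsto hcont hderiv (aux_intOn d hd) htend]
  simp

variable {n : Type*} [Fintype n] [DecidableEq n]

/-- eigenvalue upper bound gives Loewner upper bound -/
lemma eig_le_smul_one (A : Matrix n n ℂ) (hA : A.IsHermitian) (r : ℝ)
    (h : ∀ i, hA.eigenvalues i ≤ r) : (r • (1 : Matrix n n ℂ) - A).PosSemidef := by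
  set V := (hA.eigenvectorUnitary : Matrix n n ℂ) with hV
  have hVs : V * star V = 1 := Unitary.coe_mul_star_self _
  have h1 : r • (1 : Matrix n n ℂ) = V * (r • 1) * star V := by
    rw [Matrix.mul_smul, Matrix.mul_one, Matrix.smul_mul, hVs]
  have h2 : r • (1 : Matrix n n ℂ) - A
      = V * (r • 1 - Matrix.diagonal (RCLike.ofReal ∘ hA.eigenvalues)) * star V := by
    rw [Matrix.mul_sub, Matrix.sub_mul]
    rw [← h1]; conv_lhs => rw [hA.spectral_theorem, Unitary.conjStarAlgAut_apply]
  have h3 : (r • (1:Matrix n n ℂ) - Matrix.diagonal (RCLike.ofReal ∘ hA.eigenvalues))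
      = Matrix.diagonal (fun i => ((r - hA.eigenvalues i : ℝ) : ℂ)) := by
    ext i j
    by_cases hij : i = j
    · subst hij
      simp [Matrix.diagonal_apply_eq, Matrix.one_apply_eq, Complex.real_smul]
    · simp [Matrix.diagonal_apply_ne _ hij, Matrix.one_apply_ne hij]
  rw [h2, h3]
  have hd : (Matrix.diagonal (fun i => ((r - hA.eigenvalues i : ℝ) : ℂ))).PosSemidef := by
    refine Matrix.PosSemidef.diagonal (Pi.le_def.mpr fun i => ?_)
    rw [Pi.zero_apply, Complex.zero_le_real]
    linarith [h i]
  simpa [Matrix.star_eq_conjTranspose] using hd.mul_mul_conjTranspose_same V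

lemma smul_one_le_eig (A : Matrix n n ℂ) (hA : A.IsHermitian) (r : ℝ)
    (h : ∀ i, r ≤ hA.eigenvalues i) : (A - r • (1 : Matrix n n ℂ)).PosSemidef := by
  set V := (hA.eigenvectorUnitary : Matrix n n ℂ) with hV
  have hVs : V * star V = 1 := Unitary.coe_mul_star_self _
  have h1 : r • (1 : Matrix n n ℂ) = V * (r • 1) * star V := by
    rw [Matrix.mul_smul, Matrix.mul_one, Matrix.smul_mul, hVs]
  have h2 : A - r • (1 : Matrix n n ℂ)
      = V * (Matrix.diagonal (RCLike.ofReal ∘ hA.eigenvalues) - r • 1) * star V := by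
    rw [Matrix.mul_sub, Matrix.sub_mul]
    rw [← h1]; conv_lhs => rw [hA.spectral_theorem, Unitary.conjStarAlgAut_apply]
  have h3 : (Matrix.diagonal (RCLike.ofReal ∘ hA.eigenvalues) - r • (1:Matrix n n ℂ))
      = Matrix.diagonal (fun i => ((hA.eigenvalues i - r : ℝ) : ℂ)) := by
    ext i j
    by_cases hij : i = j
    · subst hij
      simp [Matrix.diagonal_apply_eq, Matrix.one_apply_eq, Complex.real_smul]
    · simp [Matrix.diagonal_apply_ne _ hij, Matrix.one_apply_ne hij]
  rw [h2, h3]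
  have hd : (Matrix.diagonal (fun i => ((hA.eigenvalues i - r : ℝ) : ℂ))).PosSemidef := by
    refine Matrix.PosSemidef.diagonal (Pi.le_def.mpr fun i => ?_)
    rw [Pi.zero_apply, Complex.zero_le_real]
    linarith [h i]
  simpa [Matrix.star_eq_conjTranspose] using hd.mul_mul_conjTranspose_same V

lemma quad_congr_aux (M C : Matrix n n ℂ) (x : n → ℂ) :
    star x ⬝ᵥ ((star M * C * M) *ᵥ x) = star (M *ᵥ x) ⬝ᵥ (C *ᵥ (M *ᵥ x)) := by
  rw [star_mulVec, ← Matrix.star_eq_conjTranspose, ← Matrix.mulVec_mulVec,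
    ← Matrix.mulVec_mulVec, dotProduct_mulVec, dotProduct_mulVec]

lemma resolvent_eq (b : Matrix n n ℂ) (hb : b.PosDef) (s : ℝ) (hs : 0 ≤ s) :
    (b + (s:ℂ) • 1)⁻¹ = (hb.1.eigenvectorUnitary : Matrix n n ℂ)
      * Matrix.diagonal (fun k => (((hb.1.eigenvalues k + s)⁻¹ : ℝ) : ℂ))
      * star (hb.1.eigenvectorUnitary : Matrix n n ℂ) := by
  set U := (hb.1.eigenvectorUnitary : Matrix n n ℂ) with hU
  have hUs : U * star U = 1 := Unitary.coe_mul_star_self _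
  have hsU : star U * U = 1 := Unitary.coe_star_mul_self _
  have hpos : ∀ k, 0 < hb.1.eigenvalues k + s :=
    fun k => add_pos_of_pos_of_nonneg (hb.eigenvalues_pos k) hs
  have hb1 : b + (s:ℂ) • 1
      = U * Matrix.diagonal (fun k => ((hb.1.eigenvalues k + s : ℝ) : ℂ)) * star U := by
    have h1 : (s:ℂ) • (1 : Matrix n n ℂ) = U * ((s:ℂ) • 1) * star U := by
      rw [Matrix.mul_smul, Matrix.mul_one, Matrix.smul_mul, hUs]
    have h3 : Matrix.diagonal (RCLike.ofReal ∘ hb.1.eigenvalues) + (s:ℂ) • (1 : Matrix n n ℂ)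
        = Matrix.diagonal (fun k => ((hb.1.eigenvalues k + s : ℝ) : ℂ)) := by
      ext i j
      by_cases hij : i = j
      · subst hij
        simp [Matrix.diagonal_apply_eq, Matrix.one_apply_eq]
      · simp [Matrix.diagonal_apply_ne _ hij, Matrix.one_apply_ne hij]
    conv_lhs => rw [hb.1.spectral_theorem, h1]
    rw [Unitary.conjStarAlgAut_apply, ← Matrix.add_mul, ← Matrix.mul_add, h3]
  rw [hb1]
  apply Matrix.inv_eq_right_inv
  set D := Matrix.diagonal (fun k => ((hb.1.eigenvalues k + s : ℝ) : ℂ)) with hD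
  set Di := Matrix.diagonal (fun k => (((hb.1.eigenvalues k + s)⁻¹ : ℝ) : ℂ)) with hDi
  have assoc : (U * D * star U) * (U * Di * star U)
      = U * ((D * ((star U * U) * Di)) * star U) := by
    simp only [Matrix.mul_assoc]
  have hDDi : D * Di = 1 := by
    rw [hD, hDi, Matrix.diagonal_mul_diagonal]
    have : (fun k => ((hb.1.eigenvalues k + s : ℝ) : ℂ) * (((hb.1.eigenvalues k + s)⁻¹ : ℝ) : ℂ))
        = fun _ => 1 := by
      funext k
      rw [← Complex.ofReal_mul, mul_inv_cancel₀ (hpos k).ne']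
      simp
    rw [this, Matrix.diagonal_one]
  rw [assoc, hsU, Matrix.one_mul, hDDi, Matrix.one_mul, hUs]

lemma quad_expand (A : Matrix n n ℂ) (x : n → ℂ) :
    star x ⬝ᵥ (A *ᵥ x) = ∑ i, ∑ j, (starRingEnd ℂ) (x i) * A i j * x j := by
  simp only [dotProduct, Matrix.mulVec, dotProduct, Pi.star_apply,
    Finset.mul_sum, RCLike.star_def]
  exact Finset.sum_congr rfl fun i _ => Finset.sum_congr rfl fun j _ => by ring

lemma triple_entry (U W C : Matrix n n ℂ) (f g : n → ℂ) (i j : n) :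
    (U * (Matrix.diagonal f * C * Matrix.diagonal g) * W) i j
      = ∑ k, ∑ l, U i k * C k l * W l j * (f k * g l) := by
  have h1 : Matrix.diagonal f * C * Matrix.diagonal g
      = Matrix.of (fun k l => f k * C k l * g l) := by
    ext k l
    rw [Matrix.mul_diagonal, Matrix.diagonal_mul]
    rfl
  rw [h1]
  simp only [Matrix.mul_apply, Matrix.of_apply, Finset.sum_mul, Finset.mul_sum]
  rw [Finset.sum_comm]
  exact Finset.sum_congr rfl fun k _ => Finset.sum_congr rfl fun l _ => by ring

lemma aux_intOn2 (d e : ℝ) (hd : 0 < d) (he : 0 < e) :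
    IntegrableOn (fun s : ℝ => (d + s)⁻¹ * (e + s)⁻¹) (Ioi 0) := by
  have hm : 0 < min d e := lt_min hd he
  refine Integrable.mono' (aux_intOn _ hm) ?_ ?_
  · refine (ContinuousOn.mul ?_ ?_).aestronglyMeasurable measurableSet_Ioi
    · exact (continuousOn_const.add continuousOn_id).inv₀
        fun x hx => by have := hx.out; exact (show (0:ℝ) < d + x by linarith).ne'
    · exact (continuousOn_const.add continuousOn_id).inv₀
        fun x hx => by have := hx.out; exact (show (0:ℝ) < e + x by linarith).ne'
  · filter_upwards [ae_restrict_mem measurableSet_Ioi] with s hs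
    have hs' : (0:ℝ) < s := hs
    have h1 : (0:ℝ) < d + s := by linarith
    have h2 : (0:ℝ) < e + s := by linarith
    have h3 : (0:ℝ) < min d e + s := by linarith [lt_min hd he]
    rw [Real.norm_eq_abs, abs_of_nonneg (by positivity)]
    have b1 : (d + s)⁻¹ ≤ (min d e + s)⁻¹ :=
      inv_anti₀ h3 (by simp [min_le_left, add_le_add_right])
    have b2 : (e + s)⁻¹ ≤ (min d e + s)⁻¹ :=
      inv_anti₀ h3 (by simp [min_le_right, add_le_add_right])
    calc (d + s)⁻¹ * (e + s)⁻¹ ≤ (min d e + s)⁻¹ * (min d e + s)⁻¹ := by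
          apply mul_le_mul b1 b2 (by positivity) (by positivity)
      _ = ((min d e + s)^2)⁻¹ := by rw [sq, mul_inv]

lemma conj_mul_conj (V D1 D2 : Matrix n n ℂ) (hsV : star V * V = 1) :
    (V * D1 * star V) * (V * D2 * star V) = V * (D1 * D2) * star V := by
  have h : (V * D1 * star V) * (V * D2 * star V)
      = V * (D1 * ((star V * V) * D2)) * star V := by
    simp only [Matrix.mul_assoc]
  rw [h, hsV, Matrix.one_mul]

lemma trace_eq_sum_eigen (Δ : Matrix n n ℂ) (hΔ : Δ.IsHermitian) :
    Δ.trace = ∑ i, (hΔ.eigenvalues i : ℂ) := by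
  conv_lhs => rw [hΔ.spectral_theorem]
  rw [Unitary.conjStarAlgAut_apply, Matrix.trace_mul_cycle, Unitary.coe_star_mul_self, Matrix.one_mul,
    Matrix.trace_diagonal]
  simp

lemma traceNorm_herm (Δ : Matrix n n ℂ) (hΔ : Δ.IsHermitian) :
    traceNorm Δ = ∑ i, |hΔ.eigenvalues i| := by
  set V := (hΔ.eigenvectorUnitary : Matrix n n ℂ) with hV
  have hsV : star V * V = 1 := Unitary.coe_star_mul_self _
  set B := V * Matrix.diagonal (fun i => ((|hΔ.eigenvalues i| : ℝ) : ℂ)) * star V with hB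
  have hBpsd : B.PosSemidef := by
    have hd : (Matrix.diagonal (fun i => ((|hΔ.eigenvalues i| : ℝ) : ℂ))).PosSemidef := by
      refine Matrix.PosSemidef.diagonal (Pi.le_def.mpr fun i => ?_)
      rw [Pi.zero_apply, Complex.zero_le_real]
      positivity
    simpa [Matrix.star_eq_conjTranspose, hB] using hd.mul_mul_conjTranspose_same V
  have hB2 : B ^ 2 = Δᴴ * Δ := by
    rw [pow_two, hB, conj_mul_conj _ _ _ hsV, Matrix.diagonal_mul_diagonal]
    rw [hΔ.eq]
    conv_rhs => rw [hΔ.spectral_theorem]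
    rw [Unitary.conjStarAlgAut_apply, conj_mul_conj _ _ _ hsV, Matrix.diagonal_mul_diagonal]
    have hfe : (fun i => ((|hΔ.eigenvalues i| : ℝ) : ℂ) * ((|hΔ.eigenvalues i| : ℝ) : ℂ))
        = (fun i => (RCLike.ofReal ∘ hΔ.eigenvalues) i * (RCLike.ofReal ∘ hΔ.eigenvalues) i) := by
      funext i
      simp [Function.comp, ← Complex.ofReal_mul, abs_mul_abs_self]
    rw [hfe]
  have hBsq : B = (Matrix.posSemidef_conjTranspose_mul_self Δ).sqrt :=
    hBpsd.eq_sqrt_of_sq_eq _ hB2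
  rw [traceNorm, ← hBsq, hB, Matrix.trace_mul_cycle, hsV, Matrix.one_mul,
    Matrix.trace_diagonal]
  rw [← Complex.ofReal_sum]
  simp

lemma quad_smul_sub (A : Matrix n n ℂ) (r : ℝ) (y : n → ℂ) :
    star y ⬝ᵥ ((r • (1 : Matrix n n ℂ) - A) *ᵥ y)
      = (r : ℂ) * (star y ⬝ᵥ y) - star y ⬝ᵥ (A *ᵥ y) := by
  rw [Matrix.sub_mulVec, dotProduct_sub]
  congr 1
  rw [Matrix.smul_mulVec, Matrix.one_mulVec, dotProduct_smul]
  rw [Complex.real_smul]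

lemma quad_sub_smul (A : Matrix n n ℂ) (r : ℝ) (y : n → ℂ) :
    star y ⬝ᵥ ((A - r • (1 : Matrix n n ℂ)) *ᵥ y)
      = star y ⬝ᵥ (A *ᵥ y) - (r : ℂ) * (star y ⬝ᵥ y) := by
  rw [Matrix.sub_mulVec, dotProduct_sub]
  congr 1
  rw [Matrix.smul_mulVec, Matrix.one_mulVec, dotProduct_smul]
  rw [Complex.real_smul]

lemma herm_quad_real (A : Matrix n n ℂ) (hA : A.IsHermitian) (v : n → ℂ) :
    (star v ⬝ᵥ (A *ᵥ v)).im = 0 := by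
  have h : (starRingEnd ℂ) (star v ⬝ᵥ (A *ᵥ v)) = star v ⬝ᵥ (A *ᵥ v) := by
    calc (starRingEnd ℂ) (star v ⬝ᵥ (A *ᵥ v))
        = star (star v ⬝ᵥ (A *ᵥ v)) := rfl
      _ = star (A *ᵥ v) ⬝ᵥ v := by
          rw [Matrix.star_dotProduct, star_star]
      _ = (star v ᵥ* Aᴴ) ⬝ᵥ v := by rw [Matrix.star_mulVec]
      _ = star v ⬝ᵥ (A *ᵥ v) := by rw [hA.eq, ← dotProduct_mulVec]
  exact Complex.conj_eq_iff_im.mp h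

end helpers

/-- If `a ≥ γ·I` then `𝒯_b(b - a) ≤ (t/(γ+t))·I` in the Loewner order, where
`t = ‖b - a‖₁ / 2` and the integral is taken entrywise. -/
theorem integral_resolvent_sub_le {n : Type*} [Fintype n] [DecidableEq n]
    (a b : Matrix n n ℂ) (ha : a.PosDef) (hb : b.PosDef)
    (htr : a.trace = b.trace)
    (γ t : ℝ) (hγ : 0 ≤ γ) (haγ : (a - γ • (1 : Matrix n n ℂ)).PosSemidef)
    (ht : t = traceNorm (b - a) / 2) :
    ((t / (γ + t)) • (1 : Matrix n n ℂ) -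
      Matrix.of (fun i j => ∫ s in Set.Ioi (0 : ℝ),
        ((b + (s : ℂ) • 1)⁻¹ * (b - a) * (b + (s : ℂ) • 1)⁻¹) i j)).PosSemidef := by
  classical
  have hΔ : (b - a).IsHermitian := hb.1.sub ha.1
  set μ : n → ℝ := hΔ.eigenvalues with hμdef
  have htrΔ : (b - a).trace = 0 := by rw [Matrix.trace_sub, htr, sub_self]
  have hsum0 : ∑ i, μ i = 0 := by
    have h1 := trace_eq_sum_eigen (b - a) hΔ
    rw [htrΔ] at h1
    have h2 : ((∑ i, μ i : ℝ) : ℂ) = 0 := by push_cast; rw [← h1]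
    exact_mod_cast h2
  have habs : ∑ i, |μ i| = 2 * t := by
    rw [ht, traceNorm_herm (b - a) hΔ]; ring
  have ht0 : (0:ℝ) ≤ t := by
    have h := Finset.sum_nonneg (fun i (_ : i ∈ Finset.univ) => abs_nonneg (μ i))
    rw [habs] at h; linarith
  have hμle : ∀ i, μ i ≤ t := by
    intro i
    have h1 : |μ i| + μ i ≤ ∑ j, (|μ j| + μ j) :=
      Finset.single_le_sum (f := fun j => |μ j| + μ j)
        (fun j _ => by show (0:ℝ) ≤ |μ j| + μ j; linarith [neg_abs_le (μ j)]) (Finset.mem_univ i)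
    rw [Finset.sum_add_distrib, habs, hsum0, add_zero] at h1
    have h2 := le_abs_self (μ i)
    linarith
  set d : n → ℝ := hb.1.eigenvalues with hddef
  have hdpos : ∀ k, 0 < d k := hb.eigenvalues_pos
  set U : Matrix n n ℂ := (hb.1.eigenvectorUnitary : Matrix n n ℂ) with hUdef
  have hUs : U * star U = 1 := Unitary.coe_mul_star_self _
  have hsU : star U * U = 1 := Unitary.coe_star_mul_self _
  set Δ' : Matrix n n ℂ := star U * (b - a) * U with hΔ'def
  have hΔ'H : Δ'.IsHermitian := by
    show Δ'ᴴ = Δ'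
    rw [hΔ'def]
    simp only [Matrix.conjTranspose_mul, Matrix.star_eq_conjTranspose,
      Matrix.conjTranspose_conjTranspose, hΔ.eq, Matrix.mul_assoc]
  set Dm : ℝ → Matrix n n ℂ := fun s => Matrix.diagonal (fun k => (((d k + s)⁻¹ : ℝ) : ℂ))
    with hDmdef
  have hDmH : ∀ s, (Dm s)ᴴ = Dm s := by
    intro s
    have h0 : Dm s = Matrix.diagonal (fun k => (((d k + s)⁻¹ : ℝ) : ℂ)) := rfl
    rw [h0, Matrix.diagonal_conjTranspose]
    have hst : (star fun k => (((d k + s)⁻¹ : ℝ) : ℂ)) = (fun k => (((d k + s)⁻¹ : ℝ) : ℂ)) := by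
      funext k
      rw [Pi.star_apply, Complex.star_def, Complex.conj_ofReal]
    rw [hst]
  set F : ℝ → Matrix n n ℂ := fun s => U * (Dm s * Δ' * Dm s) * star U with hFdef
  have hres : ∀ s : ℝ, s ∈ Set.Ioi (0:ℝ) →
      (b + (s:ℂ) • 1)⁻¹ * (b - a) * (b + (s:ℂ) • 1)⁻¹ = F s := by
    intro s hs
    rw [resolvent_eq b hb s (le_of_lt hs)]
    rw [hFdef, hΔ'def, hDmdef, hUdef, hddef]
    simp only [Matrix.mul_assoc]
  have hFH : ∀ s, (F s).IsHermitian := by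
    intro s
    show (F s)ᴴ = F s
    rw [hFdef]
    simp only [Matrix.star_eq_conjTranspose, Matrix.conjTranspose_mul,
      Matrix.conjTranspose_conjTranspose, hDmH s, hΔ'H.eq, Matrix.mul_assoc]
  have hFentry : ∀ (s : ℝ) i j, F s i j = ∑ k, ∑ l,
      U i k * Δ' k l * star U l j * (((d k + s)⁻¹ * (d l + s)⁻¹ : ℝ) : ℂ) := by
    intro s i j
    have hFs : F s = U * (Matrix.diagonal (fun k => (((d k + s)⁻¹ : ℝ) : ℂ)) * Δ'
        * Matrix.diagonal (fun k => (((d k + s)⁻¹ : ℝ) : ℂ))) * star U := rfl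
    rw [hFs, triple_entry]
    refine Finset.sum_congr rfl fun k _ => Finset.sum_congr rfl fun l _ => ?_
    push_cast
    ring
  have hFint : ∀ i j, IntegrableOn (fun s => F s i j) (Set.Ioi 0) := by
    intro i j
    have he : (fun s => F s i j) = fun s => ∑ k, ∑ l,
        U i k * Δ' k l * star U l j * (((d k + s)⁻¹ * (d l + s)⁻¹ : ℝ) : ℂ) :=
      funext fun s => hFentry s i j
    rw [he]
    refine integrable_finset_sum _ fun k _ => integrable_finset_sum _ fun l _ => ?_
    exact ((aux_intOn2 _ _ (hdpos k) (hdpos l)).ofReal).const_mul _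
  set M : Matrix n n ℂ := Matrix.of (fun i j => ∫ s in Set.Ioi (0:ℝ),
      ((b + (s : ℂ) • 1)⁻¹ * (b - a) * (b + (s : ℂ) • 1)⁻¹) i j) with hMdef
  have hMF : ∀ i j, M i j = ∫ s in Set.Ioi (0:ℝ), F s i j := by
    intro i j
    rw [hMdef]
    show (∫ s in Set.Ioi (0:ℝ), ((b + (s : ℂ) • 1)⁻¹ * (b - a) * (b + (s : ℂ) • 1)⁻¹) i j) = _
    refine setIntegral_congr_fun measurableSet_Ioi fun s hs => ?_
    rw [hres s hs]
  have hMH : M.IsHermitian := by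
    show Mᴴ = M
    ext i j
    rw [Matrix.conjTranspose_apply, hMF j i, hMF i j]
    rw [show (star (∫ s in Set.Ioi (0:ℝ), F s j i) : ℂ)
        = (starRingEnd ℂ) (∫ s in Set.Ioi (0:ℝ), F s j i) from rfl]
    rw [← integral_conj]
    refine setIntegral_congr_fun measurableSet_Ioi fun s hs => ?_
    rw [show ((starRingEnd ℂ) (F s j i)) = (F s)ᴴ i j from rfl, (hFH s).eq]
  -- final matrix is Hermitian
  have hSH : ((t / (γ + t)) • (1 : Matrix n n ℂ) - M).IsHermitian := by
    show _ᴴ = _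
    rw [Matrix.conjTranspose_sub, Matrix.conjTranspose_smul, Matrix.conjTranspose_one, hMH.eq]
    congr 1
  -- Loewner bounds on Δ'
  have hBmat : ((t : ℝ) • (1 : Matrix n n ℂ) - Δ').PosSemidef := by
    have h1 : ((t : ℝ) • (1 : Matrix n n ℂ) - (b - a)).PosSemidef :=
      eig_le_smul_one (b - a) hΔ t hμle
    have h2 : star U * ((t : ℝ) • (1 : Matrix n n ℂ) - (b - a)) * U
        = (t : ℝ) • (1 : Matrix n n ℂ) - Δ' := by
      rw [Matrix.mul_sub, Matrix.sub_mul, hΔ'def]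
      congr 1
      rw [Matrix.mul_smul, Matrix.smul_mul, Matrix.mul_one, hsU]
    have h3 := h1.conjTranspose_mul_mul_same U
    rw [Matrix.star_eq_conjTranspose] at h2
    rw [h2] at h3
    exact h3
  have hAmat : (star U * a * U - (γ : ℝ) • (1 : Matrix n n ℂ)).PosSemidef := by
    have h2 : star U * (a - (γ : ℝ) • (1 : Matrix n n ℂ)) * U
        = star U * a * U - (γ : ℝ) • (1 : Matrix n n ℂ) := by
      rw [Matrix.mul_sub, Matrix.sub_mul]
      congr 1
      rw [Matrix.mul_smul, Matrix.smul_mul, Matrix.mul_one, hsU]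
    have h3 := haγ.conjTranspose_mul_mul_same U
    rw [Matrix.star_eq_conjTranspose] at h2
    rw [h2] at h3
    exact h3
  have hb'diag : star U * b * U = Matrix.diagonal (RCLike.ofReal ∘ d) :=
    by have h := hb.1.conjStarAlgAut_star_eigenvectorUnitary
       rw [Unitary.conjStarAlgAut_apply, Unitary.coe_star, star_star] at h
       exact h
  have hΔ'split : Δ' = Matrix.diagonal (RCLike.ofReal ∘ d) - star U * a * U := by
    rw [hΔ'def, Matrix.mul_sub, Matrix.sub_mul, ← hb'diag]
  -- the semidefiniteness
  refine Matrix.PosSemidef.of_dotProduct_mulVec_nonneg hSH fun x => ?_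
  set c : n → ℂ := star U *ᵥ x with hcdef
  set w : n → ℝ := fun k => Complex.normSq (c k) with hwdef
  set y : ℝ → (n → ℂ) := fun s => Dm s *ᵥ c with hydef
  set Q : ℝ → ℂ := fun s => star x ⬝ᵥ (F s *ᵥ x) with hQdef
  have hyk : ∀ s k, y s k = (((d k + s)⁻¹ : ℝ) : ℂ) * c k := by
    intro s k
    rw [hydef]
    exact Matrix.mulVec_diagonal _ _ _
  have hQy : ∀ s, Q s = star (y s) ⬝ᵥ (Δ' *ᵥ y s) := by
    intro s
    have h2 := quad_congr_aux (star U) (Dm s * Δ' * Dm s) x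
    rw [star_star] at h2
    have h4 := quad_congr_aux (Dm s) Δ' c
    rw [show star (Dm s) = Dm s from by rw [Matrix.star_eq_conjTranspose, hDmH s]] at h4
    calc Q s = star x ⬝ᵥ ((U * (Dm s * Δ' * Dm s) * star U) *ᵥ x) := rfl
      _ = star (star U *ᵥ x) ⬝ᵥ ((Dm s * Δ' * Dm s) *ᵥ (star U *ᵥ x)) := h2
      _ = star (y s) ⬝ᵥ (Δ' *ᵥ y s) := h4
  have hQsum : ∀ s, Q s = ∑ k, ∑ l,
      (starRingEnd ℂ) (c k) * Δ' k l * c l * (((d k + s)⁻¹ * (d l + s)⁻¹ : ℝ) : ℂ) := by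
    intro s
    rw [hQy s, quad_expand]
    refine Finset.sum_congr rfl fun k _ => Finset.sum_congr rfl fun l _ => ?_
    rw [hyk s k, hyk s l, _root_.map_mul, Complex.conj_ofReal]
    push_cast
    ring
  have hQint : IntegrableOn Q (Set.Ioi 0) := by
    have he : Q = fun s => ∑ k, ∑ l,
        (starRingEnd ℂ) (c k) * Δ' k l * c l * (((d k + s)⁻¹ * (d l + s)⁻¹ : ℝ) : ℂ) :=
      funext hQsum
    rw [he]
    refine integrable_finset_sum _ fun k _ => integrable_finset_sum _ fun l _ => ?_
    exact ((aux_intOn2 _ _ (hdpos k) (hdpos l)).ofReal).const_mul _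
  -- quadratic forms as sums
  have hqy : ∀ s, (star (y s) ⬝ᵥ y s).re = ∑ k, w k * ((d k + s)^2)⁻¹ := by
    intro s
    rw [show star (y s) ⬝ᵥ y s = ∑ k, (starRingEnd ℂ) (y s k) * (y s k) from by
      simp [dotProduct, RCLike.star_def]]
    rw [Complex.re_sum]
    refine Finset.sum_congr rfl fun k _ => ?_
    rw [hyk s k, hwdef]
    rw [_root_.map_mul, Complex.conj_ofReal]
    have : (((d k + s)⁻¹ : ℝ) : ℂ) * (starRingEnd ℂ) (c k) * ((((d k + s)⁻¹ : ℝ) : ℂ) * c k)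
        = ((((d k + s)⁻¹ * (d k + s)⁻¹ : ℝ)) : ℂ) * ((starRingEnd ℂ) (c k) * c k) := by
      push_cast; ring
    rw [this]
    rw [show ((starRingEnd ℂ) (c k) * c k) = ((Complex.normSq (c k) : ℝ) : ℂ) from by
      rw [← Complex.normSq_eq_conj_mul_self]]
    rw [← Complex.ofReal_mul, Complex.ofReal_re]
    rw [sq, mul_inv]
    ring
  have hpb : ∀ s, (star (y s) ⬝ᵥ (Matrix.diagonal (RCLike.ofReal ∘ d) *ᵥ y s)).re
      = ∑ k, (w k * d k) * ((d k + s)^2)⁻¹ := by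
    intro s
    rw [show star (y s) ⬝ᵥ (Matrix.diagonal (RCLike.ofReal ∘ d) *ᵥ y s)
        = ∑ k, (starRingEnd ℂ) (y s k) * (((d k : ℝ) : ℂ) * y s k) from by
      simp [dotProduct, Matrix.mulVec_diagonal, RCLike.star_def, Function.comp]]
    rw [Complex.re_sum]
    refine Finset.sum_congr rfl fun k _ => ?_
    rw [hyk s k]
    rw [_root_.map_mul, Complex.conj_ofReal]
    have : (((d k + s)⁻¹ : ℝ) : ℂ) * (starRingEnd ℂ) (c k)
          * (((d k : ℝ) : ℂ) * ((((d k + s)⁻¹ : ℝ) : ℂ) * c k))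
        = (((d k * ((d k + s)⁻¹ * (d k + s)⁻¹) : ℝ)) : ℂ) * ((starRingEnd ℂ) (c k) * c k) := by
      push_cast; ring
    rw [this]
    rw [show ((starRingEnd ℂ) (c k) * c k) = ((Complex.normSq (c k) : ℝ) : ℂ) from by
      rw [← Complex.normSq_eq_conj_mul_self]]
    rw [← Complex.ofReal_mul, Complex.ofReal_re, hwdef]
    rw [sq, mul_inv]
    ring
  -- pointwise bounds
  have hboundB : ∀ s, (Q s).re ≤ t * ∑ k, w k * ((d k + s)^2)⁻¹ := by
    intro s
    have h0 := hBmat.dotProduct_mulVec_nonneg (y s)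
    rw [quad_smul_sub, ← hQy s] at h0
    have h1 := (Complex.le_def.mp h0).1
    rw [Complex.zero_re, Complex.sub_re, Complex.mul_re, Complex.ofReal_re,
      Complex.ofReal_im] at h1
    rw [← hqy s]
    nlinarith [h1]
  have hboundA : ∀ s, (Q s).re ≤ (∑ k, (w k * d k) * ((d k + s)^2)⁻¹)
      - γ * ∑ k, w k * ((d k + s)^2)⁻¹ := by
    intro s
    have hst : Q s = star (y s) ⬝ᵥ (Matrix.diagonal (RCLike.ofReal ∘ d) *ᵥ y s)
        - star (y s) ⬝ᵥ ((star U * a * U) *ᵥ y s) := by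
      rw [hQy s, hΔ'split, Matrix.sub_mulVec, dotProduct_sub]
    have h0 := hAmat.dotProduct_mulVec_nonneg (y s)
    rw [quad_sub_smul] at h0
    have h1 := (Complex.le_def.mp h0).1
    rw [Complex.zero_re, Complex.sub_re, Complex.mul_re, Complex.ofReal_re,
      Complex.ofReal_im] at h1
    have h2 : (Q s).re = (star (y s) ⬝ᵥ (Matrix.diagonal (RCLike.ofReal ∘ d) *ᵥ y s)).re
        - (star (y s) ⬝ᵥ ((star U * a * U) *ᵥ y s)).re := by
      rw [hst, Complex.sub_re]
    rw [h2, hpb s, ← hqy s]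
    nlinarith [h1]
  -- integrability and integral values of the scalar majorants
  have hIq : IntegrableOn (fun s => ∑ k, w k * ((d k + s)^2)⁻¹) (Set.Ioi 0) :=
    integrable_finset_sum _ fun k _ => (aux_intOn _ (hdpos k)).const_mul (w k)
  have hIp : IntegrableOn (fun s => ∑ k, (w k * d k) * ((d k + s)^2)⁻¹) (Set.Ioi 0) :=
    integrable_finset_sum _ fun k _ => (aux_intOn _ (hdpos k)).const_mul (w k * d k)
  have hVq : ∫ s in Set.Ioi (0:ℝ), (∑ k, w k * ((d k + s)^2)⁻¹) = ∑ k, w k * (d k)⁻¹ := by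
    rw [integral_finset_sum _ fun k _ => (aux_intOn _ (hdpos k)).const_mul (w k)]
    refine Finset.sum_congr rfl fun k _ => ?_
    rw [MeasureTheory.integral_const_mul, aux_int _ (hdpos k)]
  have hVp : ∫ s in Set.Ioi (0:ℝ), (∑ k, (w k * d k) * ((d k + s)^2)⁻¹) = ∑ k, w k := by
    rw [integral_finset_sum _ fun k _ => (aux_intOn _ (hdpos k)).const_mul (w k * d k)]
    refine Finset.sum_congr rfl fun k _ => ?_
    rw [MeasureTheory.integral_const_mul, aux_int _ (hdpos k), mul_assoc,
      mul_inv_cancel₀ (hdpos k).ne', mul_one]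
  have hQreInt : IntegrableOn (fun s => (Q s).re) (Set.Ioi 0) := by
    have := hQint.re
    exact this
  -- the two integral bounds
  have hI2 : (∫ s in Set.Ioi (0:ℝ), (Q s).re) ≤ t * ∑ k, w k * (d k)⁻¹ := by
    have hmono := setIntegral_mono_on hQreInt (hIq.const_mul t) measurableSet_Ioi
      (fun s _ => by simpa using hboundB s)
    calc (∫ s in Set.Ioi (0:ℝ), (Q s).re)
        ≤ ∫ s in Set.Ioi (0:ℝ), t * ∑ k, w k * ((d k + s)^2)⁻¹ := hmono
      _ = t * ∑ k, w k * (d k)⁻¹ := by rw [MeasureTheory.integral_const_mul, hVq]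
  have hI1 : (∫ s in Set.Ioi (0:ℝ), (Q s).re)
      ≤ (∑ k, w k) - γ * ∑ k, w k * (d k)⁻¹ := by
    have hmono := setIntegral_mono_on hQreInt (hIp.sub (hIq.const_mul γ)) measurableSet_Ioi
      (fun s _ => by simpa using hboundA s)
    calc (∫ s in Set.Ioi (0:ℝ), (Q s).re)
        ≤ ∫ s in Set.Ioi (0:ℝ), ((∑ k, (w k * d k) * ((d k + s)^2)⁻¹)
            - γ * ∑ k, w k * ((d k + s)^2)⁻¹) := hmono
      _ = (∑ k, w k) - γ * ∑ k, w k * (d k)⁻¹ := by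
          rw [integral_sub hIp (hIq.const_mul γ), hVp, MeasureTheory.integral_const_mul, hVq]
  -- relate the quadratic form of M to the integral
  have hquadM : star x ⬝ᵥ (M *ᵥ x) = ∫ s in Set.Ioi (0:ℝ), Q s := by
    rw [quad_expand]
    have h1 : ∀ i j, (starRingEnd ℂ) (x i) * M i j * x j
        = ∫ s in Set.Ioi (0:ℝ), ((starRingEnd ℂ) (x i) * x j) * F s i j := by
      intro i j
      rw [hMF i j, MeasureTheory.integral_const_mul]
      ring
    calc ∑ i, ∑ j, (starRingEnd ℂ) (x i) * M i j * x j
        = ∑ i, ∑ j, ∫ s in Set.Ioi (0:ℝ), ((starRingEnd ℂ) (x i) * x j) * F s i j := by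
          exact Finset.sum_congr rfl fun i _ => Finset.sum_congr rfl fun j _ => h1 i j
      _ = ∫ s in Set.Ioi (0:ℝ), ∑ i, ∑ j, ((starRingEnd ℂ) (x i) * x j) * F s i j := by
          rw [integral_finset_sum _ fun i _ => integrable_finset_sum _ fun j _ =>
            (hFint i j).const_mul _]
          refine Finset.sum_congr rfl fun i _ => ?_
          rw [integral_finset_sum _ fun j _ => (hFint i j).const_mul _]
      _ = ∫ s in Set.Ioi (0:ℝ), Q s := by
          refine setIntegral_congr_fun measurableSet_Ioi fun s _ => ?_
          show _ = star x ⬝ᵥ (F s *ᵥ x)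
          rw [quad_expand]
          exact Finset.sum_congr rfl fun i _ => Finset.sum_congr rfl fun j _ => by ring
  -- total mass
  have hX : (star x ⬝ᵥ x).re = ∑ k, w k := by
    have h1 := quad_congr_aux (star U) 1 x
    rw [star_star, Matrix.mul_one, hUs] at h1
    rw [Matrix.one_mulVec] at h1
    rw [Matrix.one_mulVec] at h1
    have h2 : star c ⬝ᵥ c = star (star U *ᵥ x) ⬝ᵥ (star U *ᵥ x) := rfl
    rw [h1, ← h2]
    rw [show star c ⬝ᵥ c = ∑ k, (starRingEnd ℂ) (c k) * (c k) from by
      simp [dotProduct, RCLike.star_def]]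
    rw [Complex.re_sum]
    refine Finset.sum_congr rfl fun k _ => ?_
    rw [show ((starRingEnd ℂ) (c k) * c k) = ((Complex.normSq (c k) : ℝ) : ℂ) from by
      rw [← Complex.normSq_eq_conj_mul_self]]
    rw [Complex.ofReal_re, hwdef]
  have hXnn : (0:ℝ) ≤ ∑ k, w k :=
    Finset.sum_nonneg fun k _ => Complex.normSq_nonneg _
  have hc0nn : (0:ℝ) ≤ ∑ k, w k * (d k)⁻¹ :=
    Finset.sum_nonneg fun k _ => mul_nonneg (Complex.normSq_nonneg _) (inv_nonneg.mpr (hdpos k).le)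
  -- assemble
  have hz : star x ⬝ᵥ (((t / (γ + t)) • (1 : Matrix n n ℂ) - M) *ᵥ x)
      = ((t / (γ + t) : ℝ) : ℂ) * (star x ⬝ᵥ x) - star x ⬝ᵥ (M *ᵥ x) :=
    quad_smul_sub M (t / (γ + t)) x
  rw [Complex.le_def]
  constructor
  · have hre2 : (star x ⬝ᵥ (M *ᵥ x)).re = ∫ s in Set.Ioi (0:ℝ), (Q s).re := by
      rw [hquadM]
      have h3 := integral_re (μ := volume.restrict (Set.Ioi 0)) (f := Q) hQint
      simpa using h3.symm
    rw [Complex.zero_re, hz, Complex.sub_re, Complex.mul_re, Complex.ofReal_re,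
      Complex.ofReal_im, hre2]
    have key : (∫ s in Set.Ioi (0:ℝ), (Q s).re) ≤ t / (γ + t) * (star x ⬝ᵥ x).re := by
      rw [hX]
      rcases eq_or_lt_of_le (by positivity : (0:ℝ) ≤ γ + t) with hgt | hgt
      · have htz : t = 0 := by linarith
        rw [← hgt]
        simp only [div_zero, zero_mul]
        have := hI2
        rw [htz, zero_mul] at this
        exact this
      · rw [div_mul_eq_mul_div, le_div_iff₀ hgt]
        nlinarith [mul_le_mul_of_nonneg_left hI2 hγ, mul_le_mul_of_nonneg_left hI1 ht0,
          hXnn, hc0nn]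
    linarith [key]
  · have him := herm_quad_real _ hSH x
    rw [Complex.zero_im, him]
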